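/- Let G be a topological group, Y a Hausdorff locally convex real topological vector space, and π a representation of G by continuous linear operators on Y such that the action map G × Y → Y, (g, y) ↦ π(g)y, is continuous and such that there is a neighborhood V of the identity in G for which the family of operators {π(g) : g ∈ V} is equicontinuous. Let y ∈ Y be such that dπ(Z)y exists for every one-parameter subgroup Z of G. If X, X₁, X₂ are one-parameter subgroups of G with X = X₁ + X₂ in the Trotter sense, then dπ(X)y = dπ(X₁)y + dπ(X₂)y. -/

import Mathlib

open Filter Topology Pointwise

/-- A one-parameter subgroup of a topological group `G`: a continuous homomorphism
from the additive group of reals into `G`. -/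
structure OneParamSubgroup (G : Type*) [Group G] [TopologicalSpace G] where
  toFun : ℝ → G
  continuous_toFun : Continuous toFun
  map_add : ∀ s t : ℝ, toFun (s + t) = toFun s * toFun t

/-- `X = X₁ + X₂` in the Trotter sense: `(X₁(t/n) X₂(t/n))^n → X(t)` uniformly on
compact subsets of `ℝ`. -/
def TrotterSum {G : Type*} [Group G] [TopologicalSpace G]
    (X X₁ X₂ : OneParamSubgroup G) : Prop :=
  ∀ K : Set ℝ, IsCompact K → ∀ W ∈ 𝓝 (1 : G), ∃ N : ℕ, ∀ n : ℕ, N ≤ n → ∀ t ∈ K,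
    (X.toFun t)⁻¹ * (X₁.toFun (t / (n : ℝ)) * X₂.toFun (t / (n : ℝ))) ^ n ∈ W

/-- `(D_X φ)(g)` exists and equals `z`. -/
def HasDirDerivAt {G Y : Type*} [Group G] [TopologicalSpace G]
    [AddCommGroup Y] [Module ℝ Y] [TopologicalSpace Y]
    (φ : G → Y) (X : OneParamSubgroup G) (g : G) (z : Y) : Prop :=
  Tendsto (fun t : ℝ => t⁻¹ • (φ (g * X.toFun t) - φ g)) (𝓝[≠] (0 : ℝ)) (𝓝 z)

/-- `φ : G → Y` is locally left uniformly continuous. -/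
def LocallyLeftUC {G Y : Type*} [Group G] [TopologicalSpace G]
    [AddCommGroup Y] [TopologicalSpace Y] (φ : G → Y) : Prop :=
  ∀ g₀ : G, ∃ V ∈ 𝓝 g₀, ∀ U ∈ 𝓝 (0 : Y), ∃ W ∈ 𝓝 (1 : G),
    ∀ x ∈ V, ∀ y ∈ V, x⁻¹ * y ∈ W → φ x - φ y ∈ U

/-- `φ` is of class LUC¹, with `D X g = (D_X φ)(g)`. -/
def IsLUC1 {G Y : Type*} [Group G] [TopologicalSpace G]
    [AddCommGroup Y] [Module ℝ Y] [TopologicalSpace Y]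
    (φ : G → Y) (D : OneParamSubgroup G → G → Y) : Prop :=
  LocallyLeftUC φ ∧ (∀ X g, HasDirDerivAt φ X g (D X g)) ∧
    ∀ X, LocallyLeftUC (D X)


private lemma ops_map_zero {G : Type*} [Group G] [TopologicalSpace G]
    (X : OneParamSubgroup G) : X.toFun 0 = 1 := by
  have h := X.map_add 0 0
  rw [add_zero] at h
  exact (left_eq_mul.mp h)

private lemma ops_telescope {G Y : Type*} [Group G]
    [AddCommGroup Y] [Module ℝ Y] [TopologicalSpace Y]
    (π : G → Y →L[ℝ] Y) (hπ_one : π 1 = ContinuousLinearMap.id ℝ Y)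
    (hπ_mul : ∀ g h : G, π (g * h) = (π g).comp (π h))
    (g : G) (y : Y) :
    ∀ n : ℕ, π (g ^ n) y - y = ∑ k ∈ Finset.range n, π (g ^ k) (π g y - y) := by
  intro n
  induction n with
  | zero => simp [hπ_one]
  | succ n ih =>
    rw [Finset.sum_range_succ, ← ih, pow_succ, hπ_mul]
    simp only [ContinuousLinearMap.comp_apply, map_sub]
    abel

private lemma ops_equicont {G Y : Type*} [TopologicalSpace G]
    [AddCommGroup Y] [Module ℝ Y] [TopologicalSpace Y]
    (π : G → Y →L[ℝ] Y)
    (hπ_cont : Continuous fun p : G × Y => π p.1 p.2)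
    {C : Set G} (hC : IsCompact C) {U : Set Y} (hU : U ∈ 𝓝 (0 : Y)) :
    ∃ C' : Set G, IsOpen C' ∧ C ⊆ C' ∧ ∃ U₁ ∈ 𝓝 (0 : Y),
      ∀ h ∈ C', ∀ ξ ∈ U₁, π h ξ ∈ U := by
  have key : ∀ c : G, ∃ A : Set G, IsOpen A ∧ c ∈ A ∧ ∃ B ∈ 𝓝 (0 : Y),
      ∀ h ∈ A, ∀ ξ ∈ B, π h ξ ∈ U := by
    intro c
    have hc : ContinuousAt (fun p : G × Y => π p.1 p.2) (c, 0) := hπ_cont.continuousAt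
    have hm : (fun p : G × Y => π p.1 p.2) ⁻¹' U ∈ 𝓝 ((c, (0 : Y))) :=
      hc.preimage_mem_nhds (by simpa using hU)
    rw [nhds_prod_eq, Filter.mem_prod_iff] at hm
    obtain ⟨A₀, hA₀, B, hB, hAB⟩ := hm
    obtain ⟨A, hAsub, hAopen, hcA⟩ := mem_nhds_iff.mp hA₀
    exact ⟨A, hAopen, hcA, B, hB, fun h hh ξ hξ =>
      hAB (Set.mk_mem_prod (hAsub hh) hξ)⟩
  choose A hAopen hmemA B hB hAB using key
  obtain ⟨s, _, hcover⟩ := hC.elim_nhds_subcover A (fun c _ => (hAopen c).mem_nhds (hmemA c))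
  refine ⟨⋃ c ∈ s, A c, isOpen_biUnion fun c _ => hAopen c, hcover, ⋂ c ∈ s, B c,
    (Filter.biInter_finset_mem s).mpr fun c _ => hB c, ?_⟩
  intro h hh ξ hξ
  simp only [Set.mem_iUnion] at hh
  obtain ⟨c, hcs, hhc⟩ := hh
  simp only [Set.mem_iInter] at hξ
  exact hAB c h hhc ξ (hξ c hcs)

theorem dPi_add_of_trotterSum
    {G Y : Type*} [Group G] [TopologicalSpace G] [IsTopologicalGroup G]
    [AddCommGroup Y] [Module ℝ Y] [TopologicalSpace Y] [IsTopologicalAddGroup Y]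
    [ContinuousSMul ℝ Y] [LocallyConvexSpace ℝ Y] [T2Space Y]
    (π : G → Y →L[ℝ] Y)
    (hπ_one : π 1 = ContinuousLinearMap.id ℝ Y)
    (hπ_mul : ∀ g h : G, π (g * h) = (π g).comp (π h))
    (hπ_cont : Continuous fun p : G × Y => π p.1 p.2)
    (hequi : ∃ V ∈ 𝓝 (1 : G), ∀ U ∈ 𝓝 (0 : Y), ∃ U' ∈ 𝓝 (0 : Y),
      ∀ g ∈ V, ∀ z ∈ U', π g z ∈ U)
    (y : Y)
    (hall : ∀ Z : OneParamSubgroup G, ∃ w : Y,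
      Tendsto (fun t : ℝ => t⁻¹ • (π (Z.toFun t) y - y)) (𝓝[≠] (0 : ℝ)) (𝓝 w))
    (X X₁ X₂ : OneParamSubgroup G) (hX : TrotterSum X X₁ X₂)
    (z z₁ z₂ : Y)
    (hz : Tendsto (fun t : ℝ => t⁻¹ • (π (X.toFun t) y - y)) (𝓝[≠] (0 : ℝ)) (𝓝 z))
    (hz₁ : Tendsto (fun t : ℝ => t⁻¹ • (π (X₁.toFun t) y - y)) (𝓝[≠] (0 : ℝ)) (𝓝 z₁))
    (hz₂ : Tendsto (fun t : ℝ => t⁻¹ • (π (X₂.toFun t) y - y)) (𝓝[≠] (0 : ℝ)) (𝓝 z₂)) :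
    z = z₁ + z₂ := by
  classical
  set w := z₁ + z₂ with hwdef
  have hX0 : X.toFun 0 = 1 := ops_map_zero X
  have hX₁0 : X₁.toFun 0 = 1 := ops_map_zero X₁
  have hX₂0 : X₂.toFun 0 = 1 := ops_map_zero X₂
  set v : ℝ → Y := fun s => s⁻¹ • (π (X₁.toFun s * X₂.toFun s) y - y) with hvdef
  have hveq : ∀ s : ℝ, v s = π (X₁.toFun s) (s⁻¹ • (π (X₂.toFun s) y - y))
      + s⁻¹ • (π (X₁.toFun s) y - y) := by
    intro s
    simp only [hvdef, hπ_mul, ContinuousLinearMap.comp_apply, map_smul, map_sub, smul_sub]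
    abel
  have hv : Tendsto v (𝓝[≠] (0 : ℝ)) (𝓝 w) := by
    have h1 : Tendsto (fun s : ℝ => X₁.toFun s) (𝓝[≠] (0 : ℝ)) (𝓝 1) := by
      have h0 := X₁.continuous_toFun.tendsto 0
      rw [hX₁0] at h0
      exact h0.mono_left nhdsWithin_le_nhds
    have hA : Tendsto (fun s : ℝ => π (X₁.toFun s) (s⁻¹ • (π (X₂.toFun s) y - y)))
        (𝓝[≠] (0 : ℝ)) (𝓝 z₂) := by
      have h2 : Tendsto (fun s : ℝ => ((X₁.toFun s), s⁻¹ • (π (X₂.toFun s) y - y)))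
          (𝓝[≠] (0 : ℝ)) (𝓝 ((1 : G), z₂)) := h1.prodMk_nhds hz₂
      have h3 := (hπ_cont.tendsto ((1 : G), z₂)).comp h2
      rw [hπ_one] at h3
      simpa only [Function.comp_def, ContinuousLinearMap.id_apply] using h3
    have h4 := hA.add hz₁
    have h5 : z₂ + z₁ = w := by rw [hwdef]; abel
    rw [h5] at h4
    exact h4.congr fun s => (hveq s).symm
  have hmono : 𝓝[>] (0 : ℝ) ≤ 𝓝[≠] (0 : ℝ) :=
    nhdsWithin_mono 0 fun x hx => Set.mem_compl_singleton_iff.mpr (ne_of_gt hx)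
  refine tendsto_nhds_unique (hz.mono_left hmono) ?_
  rw [← tendsto_sub_nhds_zero_iff, Filter.tendsto_def]
  intro U₀ hU₀
  obtain ⟨V₁, hV₁mem, hV₁closed, hV₁sub⟩ := exists_mem_nhds_isClosed_subset hU₀
  obtain ⟨U, ⟨hUmem, hUconv⟩, hUV₁⟩ :=
    (LocallyConvexSpace.convex_basis_zero ℝ Y).mem_iff.mp hV₁mem
  have hclU : closure U ⊆ U₀ := (closure_minimal hUV₁ hV₁closed).trans hV₁sub
  obtain ⟨U₂, hU₂mem, hU₂⟩ := exists_nhds_zero_half hUmem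
  set C : Set G := X.toFun '' Set.Icc 0 1 with hCdef
  have hCcomp : IsCompact C := isCompact_Icc.image X.continuous_toFun
  obtain ⟨C', hC'open, hCC', U₁, hU₁mem, hequiC⟩ := ops_equicont π hπ_cont hCcomp hU₂mem
  have h1C' : (1 : G) ∈ C' := hCC' ⟨0, ⟨le_refl 0, zero_le_one⟩, hX0⟩
  obtain ⟨W₁, hW₁mem, hCW₁⟩ := compact_open_separated_mul_right hCcomp hC'open hCC'
  have hΩ : {h : G | π h w - w ∈ U₂} ∈ 𝓝 (1 : G) := by
    have hΩcont : Continuous fun h : G => π h w - w :=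
      (hπ_cont.comp (continuous_id.prodMk continuous_const)).sub continuous_const
    have h0 : π (1 : G) w - w = 0 := by simp [hπ_one]
    exact hΩcont.continuousAt.preimage_mem_nhds (by rw [h0]; exact hU₂mem)
  obtain ⟨Ω₀, hΩ₀open, h1Ω₀, hΩ₀sq⟩ := exists_open_nhds_one_mul_subset hΩ
  set W := W₁ ∩ Ω₀ with hWdef
  have hWmem : W ∈ 𝓝 (1 : G) := Filter.inter_mem hW₁mem (hΩ₀open.mem_nhds h1Ω₀)
  obtain ⟨N, hN⟩ := hX (Set.Icc 0 1) isCompact_Icc W hWmem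
  set Θ : Set G := ⋂ k ∈ Finset.range N,
      (fun g : G => g ^ k) ⁻¹' ({h : G | π h w - w ∈ U₂} ∩ C') with hΘdef
  have hΘmem : Θ ∈ 𝓝 (1 : G) := by
    refine (Filter.biInter_finset_mem _).mpr fun k _ => ?_
    refine (continuous_pow k).continuousAt.preimage_mem_nhds ?_
    rw [one_pow]
    exact Filter.inter_mem hΩ (hC'open.mem_nhds h1C')
  -- δ₁
  have hXΩ₀ : X.toFun ⁻¹' Ω₀ ∈ 𝓝 (0 : ℝ) := by
    refine X.continuous_toFun.continuousAt.preimage_mem_nhds ?_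
    rw [hX0]; exact hΩ₀open.mem_nhds h1Ω₀
  obtain ⟨ε₁, hε₁pos, hε₁⟩ := Metric.mem_nhds_iff.mp hXΩ₀
  set δ₁ : ℝ := min (ε₁ / 2) 1 with hδ₁def
  have hδ₁pos : 0 < δ₁ := lt_min (by linarith) one_pos
  have hδ₁le1 : δ₁ ≤ 1 := min_le_right _ _
  have hδ₁prop : ∀ τ : ℝ, 0 ≤ τ → τ ≤ δ₁ → X.toFun τ ∈ Ω₀ := by
    intro τ h0 h1
    apply hε₁
    rw [Metric.mem_ball, Real.dist_eq, sub_zero, abs_of_nonneg h0]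
    have h2 : δ₁ ≤ ε₁ / 2 := min_le_left _ _
    linarith
  -- δ₂
  have hvU₁ : {s : ℝ | v s - w ∈ U₁} ∈ 𝓝[≠] (0 : ℝ) := by
    have hmemw : {ξ : Y | ξ - w ∈ U₁} ∈ 𝓝 w :=
      (continuous_id.sub continuous_const).continuousAt.preimage_mem_nhds
        (by convert hU₁mem using 2; exact sub_self w)
    exact hv hmemw
  obtain ⟨ε₂, hε₂pos, hε₂⟩ := Metric.mem_nhdsWithin_iff.mp hvU₁
  set δ₂ : ℝ := ε₂ / 2 with hδ₂def
  have hδ₂pos : 0 < δ₂ := by positivity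
  have hδ₂prop : ∀ s : ℝ, 0 < s → s ≤ δ₂ → v s - w ∈ U₁ := by
    intro s h0 h1
    refine hε₂ ⟨?_, Set.mem_compl_singleton_iff.mpr (ne_of_gt h0)⟩
    rw [Metric.mem_ball, Real.dist_eq, sub_zero, abs_of_pos h0]
    linarith
  -- δ₃
  have hΘpre : (fun s : ℝ => X₁.toFun s * X₂.toFun s) ⁻¹' Θ ∈ 𝓝 (0 : ℝ) := by
    refine (X₁.continuous_toFun.mul X₂.continuous_toFun).continuousAt.preimage_mem_nhds ?_
    rw [Pi.mul_apply, hX₁0, hX₂0, one_mul]; exact hΘmem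
  obtain ⟨ε₃, hε₃pos, hε₃⟩ := Metric.mem_nhds_iff.mp hΘpre
  set δ₃ : ℝ := ε₃ / 2 with hδ₃def
  have hδ₃pos : 0 < δ₃ := by positivity
  have hδ₃prop : ∀ s : ℝ, |s| ≤ δ₃ → X₁.toFun s * X₂.toFun s ∈ Θ := by
    intro s h
    refine hε₃ ?_
    rw [Metric.mem_ball, Real.dist_eq, sub_zero]
    linarith
  -- main estimate
  rw [Metric.mem_nhdsWithin_iff]
  refine ⟨min δ₁ δ₂, lt_min hδ₁pos hδ₂pos, ?_⟩
  rintro t ⟨htball, htpos⟩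
  have ht0 : (0 : ℝ) < t := htpos
  rw [Metric.mem_ball, Real.dist_eq, sub_zero, abs_of_pos ht0] at htball
  have htδ₁ : t ≤ δ₁ := le_of_lt (lt_of_lt_of_le htball (min_le_left _ _))
  have htδ₂ : t ≤ δ₂ := le_of_lt (lt_of_lt_of_le htball (min_le_right _ _))
  have ht1 : t ≤ 1 := htδ₁.trans hδ₁le1
  simp only [Set.mem_preimage]
  apply hclU
  set A : ℕ → G := fun n => (X₁.toFun (t / (n : ℝ)) * X₂.toFun (t / (n : ℝ))) ^ n with hAdef
  have hAtend : Tendsto A atTop (𝓝 (X.toFun t)) := by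
    have hinv : Tendsto (fun n : ℕ => (X.toFun t)⁻¹ * A n) atTop (𝓝 1) := by
      rw [Filter.tendsto_atTop']
      intro S hS
      obtain ⟨M, hM⟩ := hX {t} isCompact_singleton S hS
      exact ⟨M, fun n hn => hM n hn t rfl⟩
    have h6 := (tendsto_const_nhds (x := X.toFun t) (f := atTop (α := ℕ))).mul hinv
    simp only [mul_inv_cancel_left, mul_one] at h6
    exact h6
  have hlim : Tendsto (fun n : ℕ => t⁻¹ • (π (A n) y - y) - w) atTop
      (𝓝 (t⁻¹ • (π (X.toFun t) y - y) - w)) := by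
    have h1 : Tendsto (fun n : ℕ => π (A n) y) atTop (𝓝 (π (X.toFun t) y)) :=
      (hπ_cont.tendsto ((X.toFun t), y)).comp (hAtend.prodMk_nhds tendsto_const_nhds)
    exact ((h1.sub_const y).const_smul t⁻¹).sub_const w
  apply isClosed_closure.mem_of_tendsto hlim
  filter_upwards [eventually_ge_atTop (max (max N 1) ⌈t / δ₃⌉₊)] with n hn
  apply subset_closure
  have hn1 : 1 ≤ n := le_trans (le_trans (le_max_right N 1) (le_max_left _ _)) hn
  have hnN : N ≤ n := le_trans (le_trans (le_max_left N 1) (le_max_left _ _)) hn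
  have hnceil : ⌈t / δ₃⌉₊ ≤ n := le_trans (le_max_right _ _) hn
  have hnpos : (0 : ℝ) < (n : ℝ) := by exact_mod_cast lt_of_lt_of_le zero_lt_one hn1
  have hn0 : (n : ℝ) ≠ 0 := ne_of_gt hnpos
  set s : ℝ := t / (n : ℝ) with hsdef
  have hspos : 0 < s := div_pos ht0 hnpos
  have hsle : s ≤ t := by
    rw [hsdef]
    exact div_le_self ht0.le (by exact_mod_cast hn1)
  have hsδ₂ : s ≤ δ₂ := hsle.trans htδ₂
  have hsδ₃ : s ≤ δ₃ := by
    have h2 : t / δ₃ ≤ (n : ℝ) := (Nat.le_ceil (t / δ₃)).trans (by exact_mod_cast hnceil)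
    rw [div_le_iff₀ hδ₃pos] at h2
    rw [hsdef, div_le_iff₀ hnpos]
    linarith
  set g : G := X₁.toFun s * X₂.toFun s with hgdef
  have hgΘ : g ∈ Θ := hδ₃prop s (by rw [abs_of_pos hspos]; exact hsδ₃)
  have hvmem : v s - w ∈ U₁ := hδ₂prop s hspos hsδ₂
  have hgk : ∀ k, k < n → g ^ k ∈ {h : G | π h w - w ∈ U₂} ∩ C' := by
    intro k hk
    rcases lt_or_ge k N with hkN | hkN
    · have := Set.mem_iInter₂.mp hgΘ k (Finset.mem_range.mpr hkN)
      exact this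
    · rcases Nat.eq_zero_or_pos k with hk0 | hk0
      · subst hk0
        simp only [pow_zero]
        exact ⟨by simpa [hπ_one] using mem_of_mem_nhds hU₂mem, h1C'⟩
      · have hkR : (0 : ℝ) < (k : ℝ) := by exact_mod_cast hk0
        set τ : ℝ := (k : ℝ) * t / (n : ℝ) with hτdef
        have hτ0 : 0 ≤ τ := by positivity
        have hτt : τ ≤ t := by
          rw [hτdef, div_le_iff₀ hnpos]
          have : (k : ℝ) ≤ (n : ℝ) := by exact_mod_cast hk.le
          nlinarith
        have hτ1 : τ ∈ Set.Icc (0 : ℝ) 1 := ⟨hτ0, hτt.trans ht1⟩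
        have hτk : τ / (k : ℝ) = s := by
          rw [hτdef, hsdef]
          field_simp
        have htr := hN k hkN τ hτ1
        rw [hτk] at htr
        have htrW : (X.toFun τ)⁻¹ * g ^ k ∈ W := htr
        have hrepr : g ^ k = X.toFun τ * ((X.toFun τ)⁻¹ * g ^ k) :=
          (mul_inv_cancel_left _ _).symm
        constructor
        · have hXτ : X.toFun τ ∈ Ω₀ := hδ₁prop τ hτ0 (hτt.trans htδ₁)
          have hmm : g ^ k ∈ Ω₀ * Ω₀ := by
            rw [hrepr]; exact Set.mul_mem_mul hXτ htrW.2
          exact hΩ₀sq hmm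
        · have hXτC : X.toFun τ ∈ C := ⟨τ, hτ1, rfl⟩
          have hmm : g ^ k ∈ C * W₁ := by
            rw [hrepr]; exact Set.mul_mem_mul hXτC htrW.1
          exact hCW₁ hmm
  have hAn : A n = g ^ n := rfl
  have htel : t⁻¹ • (π (A n) y - y) - w
      = ∑ k ∈ Finset.range n, (n : ℝ)⁻¹ • (π (g ^ k) (v s) - w) := by
    have h2 : π g y - y = s • v s := by
      simp only [hvdef]
      rw [smul_inv_smul₀ (ne_of_gt hspos)]
    have h3 : ∀ k : ℕ, π (g ^ k) (π g y - y) = s • π (g ^ k) (v s) := by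
      intro k; rw [h2, map_smul]
    have h4 : t⁻¹ * s = (n : ℝ)⁻¹ := by
      rw [hsdef, div_eq_mul_inv, ← mul_assoc, inv_mul_cancel₀ (ne_of_gt ht0), one_mul]
    rw [hAn, ops_telescope π hπ_one hπ_mul g y n, Finset.sum_congr rfl fun k _ => h3 k,
      ← Finset.smul_sum, smul_smul, h4]
    rw [eq_comm]
    calc ∑ k ∈ Finset.range n, (n : ℝ)⁻¹ • (π (g ^ k) (v s) - w)
        = ∑ k ∈ Finset.range n, ((n : ℝ)⁻¹ • π (g ^ k) (v s) - (n : ℝ)⁻¹ • w) := by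
          simp [smul_sub]
      _ = (∑ k ∈ Finset.range n, (n : ℝ)⁻¹ • π (g ^ k) (v s)) - n • ((n : ℝ)⁻¹ • w) := by
          rw [Finset.sum_sub_distrib, Finset.sum_const, Finset.card_range]
      _ = (n : ℝ)⁻¹ • (∑ k ∈ Finset.range n, π (g ^ k) (v s)) - w := by
          rw [← Finset.smul_sum]
          congr 1
          rw [← Nat.cast_smul_eq_nsmul ℝ, smul_smul, mul_inv_cancel₀ hn0, one_smul]
  rw [htel]
  apply hUconv.sum_mem
  · intro k _; positivity
  · rw [Finset.sum_const, Finset.card_range, nsmul_eq_mul, mul_inv_cancel₀ hn0]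
  · intro k hk
    obtain ⟨hΩk, hC'k⟩ := hgk k (Finset.mem_range.mp hk)
    have e1 : π (g ^ k) (v s - w) ∈ U₂ := hequiC _ hC'k _ hvmem
    have e2 : π (g ^ k) w - w ∈ U₂ := hΩk
    have heq : π (g ^ k) (v s) - w = π (g ^ k) (v s - w) + (π (g ^ k) w - w) := by
      rw [map_sub]; abel
    rw [heq]
    exact hU₂ _ e1 _ e2
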